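/- Assume n ≥ 2, gcd(a_1, …, a_n, r) = 1, and that the star subdivision at v = (1/r)(a_1, …, a_n) is good. Let Γ′ ⊆ ℤ^n be a G_k-brick and set Γ := φ_k^{−1}(Γ′). Then for every m ∈ ℤ^n one has wt_{Γ′}(φ_k(m)) = φ_k(wt_Γ(m)), where wt_Γ(m) is the unique element of Γ with the same G-weight as m and wt_{Γ′}(c) is the unique element of Γ′ with the same G_k-weight as c. -/

import Mathlib

open scoped BigOperators

/-- The `k`-th round down function of the star subdivision at `v = (1/r)(a 1, …, a n)`. -/
def roundDown (n : ℕ) (r : ℕ) (a : Fin n → ℕ) (k : Fin n) (m : Fin n → ℤ) :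
    Fin n → ℤ :=
  Function.update m k (Int.fdiv (∑ j, (a j : ℤ) * m j) (r : ℤ))

/-- A weight map `ℤⁿ → ℤ/sℤ`, `m ↦ ∑ j, b j * m j mod s`. -/
def wmap (n s : ℕ) (b : Fin n → ℤ) (m : Fin n → ℤ) : ZMod s :=
  ((∑ j, b j * m j : ℤ) : ZMod s)

/-- Coercion of a vector of naturals to a vector of integers. -/
def natVec {n : ℕ} (p : Fin n → ℕ) : Fin n → ℤ := fun j => (p j : ℤ)

/-- A `w`-prebrick for the weight map `wmap n s b`: a subset `Γ ⊆ ℤⁿ` containing `0`,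
on which the weight map restricts to a bijection onto `ℤ/sℤ`, closed under "division"
(if `γ + p + q ∈ Γ` with `p, q ∈ ℕⁿ` and `γ ∈ Γ` then `γ + p ∈ Γ`), and connected
(every element joined to `0` by a path inside `Γ` with steps `± e_i`). -/
def IsPrebrick (n s : ℕ) (b : Fin n → ℤ) (Γ : Set (Fin n → ℤ)) : Prop :=
  (0 : Fin n → ℤ) ∈ Γ ∧
  Set.BijOn (wmap n s b) Γ Set.univ ∧
  (∀ γ ∈ Γ, ∀ p q : Fin n → ℕ,
    γ + natVec p + natVec q ∈ Γ → γ + natVec p ∈ Γ) ∧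
  (∀ γ ∈ Γ, ∃ (N : ℕ) (c : ℕ → Fin n → ℤ), c 0 = γ ∧ c N = 0 ∧
    (∀ t ≤ N, c t ∈ Γ) ∧
    (∀ t < N, ∃ i : Fin n,
      c (t + 1) = c t + Pi.single i 1 ∨ c (t + 1) = c t - Pi.single i 1))

/-- Generators of the monoid `S(Γ)`: elements `p + γ - w_Γ(p + γ)` where `p ∈ ℕⁿ`,
`γ ∈ Γ` and `w_Γ(p + γ)` is the (unique) element `γ' ∈ Γ` of the same weight as `p + γ`. -/
def brickGens (n s : ℕ) (b : Fin n → ℤ) (Γ : Set (Fin n → ℤ)) : Set (Fin n → ℤ) :=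
  {d | ∃ p : Fin n → ℕ, ∃ γ ∈ Γ, ∃ γ' ∈ Γ,
    wmap n s b (natVec p + γ) = wmap n s b γ' ∧ d = natVec p + γ - γ'}

/-- The submonoid `S(Γ)` of `(ℤⁿ, +)`. -/
def SGamma (n s : ℕ) (b : Fin n → ℤ) (Γ : Set (Fin n → ℤ)) :
    AddSubmonoid (Fin n → ℤ) :=
  AddSubmonoid.closure (brickGens n s b Γ)

/-- A `w`-brick: a `w`-prebrick with `S(Γ) ∩ (-S(Γ)) = {0}`. -/
def IsBrick (n s : ℕ) (b : Fin n → ℤ) (Γ : Set (Fin n → ℤ)) : Prop :=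
  IsPrebrick n s b Γ ∧
  ∀ d ∈ SGamma n s b Γ, -d ∈ SGamma n s b Γ → d = 0


private lemma wmap_roundDown_key (n r : ℕ) (a : Fin n → ℕ) (k : Fin n) (m : Fin n → ℤ) :
    wmap n (a k) (fun j => if j = k then -(r : ℤ) else (a j : ℤ)) (roundDown n r a k m)
      = ((Int.fmod (∑ j, (a j : ℤ) * m j) r : ℤ) : ZMod (a k)) := by
  unfold wmap roundDown
  set S : ℤ := ∑ j, (a j : ℤ) * m j with hS
  have hsum : ∑ j, (if j = k then -(r:ℤ) else (a j:ℤ)) * Function.update m k (S.fdiv r) j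
      = -(r:ℤ) * S.fdiv r + (S - (a k : ℤ) * m k) := by
    rw [← Finset.sum_erase_add _ _ (Finset.mem_univ k)]
    have h1 : ∀ j ∈ Finset.univ.erase k,
        (if j = k then -(r:ℤ) else (a j:ℤ)) * Function.update m k (S.fdiv r) j
          = (a j : ℤ) * m j := by
      intro j hj
      have hjk : j ≠ k := (Finset.mem_erase.mp hj).1
      simp [hjk, Function.update_of_ne hjk]
    rw [Finset.sum_congr rfl h1]
    have h2 : ∑ j ∈ Finset.univ.erase k, (a j : ℤ) * m j = S - (a k : ℤ) * m k := by
      rw [hS, ← Finset.sum_erase_add _ _ (Finset.mem_univ k)]; ring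
    simp [h2]
    ring
  rw [hsum]
  have hfm : -(r:ℤ) * S.fdiv r = S.fmod r - S := by
    have := Int.fmod_add_mul_fdiv S r
    linarith
  rw [hfm]
  have : S.fmod ↑r - S + (S - (a k : ℤ) * m k) = S.fmod r - (a k : ℤ) * m k := by ring
  rw [this]
  push_cast
  simp [ZMod.natCast_self]

/-- For the natural inverse `Γ = φ_k⁻¹(Γ')` of a `G_k`-brick `Γ'`, and any `m ∈ ℤⁿ`:
if `g` is the element of `Γ` with the same `G`-weight as `m` (i.e. `g = wt_Γ(m)`) and
`g'` is the element of `Γ'` with the same `G_k`-weight as `φ_k(m)` (i.e.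
`g' = wt_{Γ'}(φ_k(m))`), then `g' = φ_k(g)`, i.e. `wt_{Γ'}(φ_k(m)) = φ_k(wt_Γ(m))`. -/
theorem stmt_8 (n : ℕ) (hn : 2 ≤ n) (r : ℕ) (hr : 1 ≤ r) (a : Fin n → ℕ)
    (ha : ∀ j, 0 < a j) (k : Fin n)
    (hgcd : Nat.gcd (Finset.univ.gcd a) r = 1)
    (hgood : ∀ i j : Fin n, i ≠ j → a i + a j ≤ r)
    (Γ' : Set (Fin n → ℤ))
    (hΓ' : IsBrick n (a k) (fun j => if j = k then -(r : ℤ) else (a j : ℤ)) Γ')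
    (m g g' : Fin n → ℤ)
    (hg : g ∈ {m | roundDown n r a k m ∈ Γ'})
    (hgwt : wmap n r (fun j => (a j : ℤ)) g = wmap n r (fun j => (a j : ℤ)) m)
    (hg' : g' ∈ Γ')
    (hg'wt : wmap n (a k) (fun j => if j = k then -(r : ℤ) else (a j : ℤ)) g' =
      wmap n (a k) (fun j => if j = k then -(r : ℤ) else (a j : ℤ)) (roundDown n r a k m)) :
    g' = roundDown n r a k g := by
  have hfmod : (∑ j, (a j : ℤ) * g j).fmod r = (∑ j, (a j : ℤ) * m j).fmod r := by
    have hmod : (∑ j, (a j : ℤ) * g j) ≡ (∑ j, (a j : ℤ) * m j) [ZMOD (r:ℕ)] :=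
      (ZMod.intCast_eq_intCast_iff _ _ _).mp hgwt
    rw [Int.fmod_eq_emod_of_nonneg _ (by positivity), Int.fmod_eq_emod_of_nonneg _ (by positivity)]
    exact hmod
  have hw : wmap n (a k) (fun j => if j = k then -(r : ℤ) else (a j : ℤ)) g' =
      wmap n (a k) (fun j => if j = k then -(r : ℤ) else (a j : ℤ)) (roundDown n r a k g) := by
    rw [hg'wt, wmap_roundDown_key, wmap_roundDown_key, hfmod]
  exact hΓ'.1.2.1.injOn hg' hg hw
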